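/- If v ∈ tsns^{⊗n} (n ≥ 1) satisfies x∗v = 0 for all x ∈ tsns under the adjoint diagonal action, then v ∈ (ℂM_0)^{⊗n}. -/
import Mathlib


open Finsupp

/-- Basis indices of the twisted `N = 1` Schrödinger–Neveu–Schwarz algebra.
`L n` is `L_n` (`n ∈ ℤ`), `G k` is `G_{k+1/2}` (`k ∈ ℤ`),
`Y k` is `Y_{k/2}` and `M k` is `M_{k/2}` (`k ∈ ℤ`, so `k/2` ranges over `(1/2)ℤ`). -/
inductive TIdx : Type
  | L : ℤ → TIdx
  | G : ℤ → TIdx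
  | Y : ℤ → TIdx
  | M : ℤ → TIdx
  deriving DecidableEq

noncomputable section

/-- The underlying vector space of `tsns`: the free `ℂ`-vector space on the basis. -/
abbrev Tsns : Type := TIdx →₀ ℂ

/-- The basis vectors. -/
def bs (i : TIdx) : Tsns := Finsupp.single i 1

/-- The `ℤ₂`-parity of a basis vector. -/
def parity : TIdx → ZMod 2
  | .L _ => 0
  | .G _ => 1
  | .Y k => (k : ZMod 2)
  | .M k => (k : ZMod 2)

/-- The sign `(-1)^{ab}` for parities `a, b`. -/
def sg (a b : ZMod 2) : ℂ := if a = 1 ∧ b = 1 then -1 else 1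

/-- The super-bracket of `tsns` on basis vectors. -/
def brIdx : TIdx → TIdx → Tsns
  | .L n, .L m => ((m : ℂ) - n) • bs (.L (n + m))
  | .L n, .G k => ((k : ℂ) + 1/2 - n/2) • bs (.G (k + n))
  | .G k, .L n => (-((k : ℂ) + 1/2 - n/2)) • bs (.G (k + n))
  | .L n, .Y k => (if (k : ZMod 2) = 0 then ((k : ℂ) - n)/2 else (k : ℂ)/2) • bs (.Y (k + 2*n))
  | .Y k, .L n => (-(if (k : ZMod 2) = 0 then ((k : ℂ) - n)/2 else (k : ℂ)/2)) • bs (.Y (k + 2*n))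
  | .L n, .M k => (if (k : ZMod 2) = 0 then (k : ℂ)/2 else ((k : ℂ) + n)/2) • bs (.M (k + 2*n))
  | .M k, .L n => (-(if (k : ZMod 2) = 0 then (k : ℂ)/2 else ((k : ℂ) + n)/2)) • bs (.M (k + 2*n))
  | .G k, .G l => (2 : ℂ) • bs (.L (k + l + 1))
  | .G l, .Y k => (if (k : ZMod 2) = 0 then ((k : ℂ) - 2*l - 1)/4 else 2) • bs (.Y (k + 2*l + 1))
  | .Y k, .G l => (if (k : ZMod 2) = 0 then -(((k : ℂ) - 2*l - 1)/4) else 2) • bs (.Y (k + 2*l + 1))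
  | .G l, .M k => (if (k : ZMod 2) = 0 then (k : ℂ)/4 else 2) • bs (.M (k + 2*l + 1))
  | .M k, .G l => (if (k : ZMod 2) = 0 then -((k : ℂ)/4) else 2) • bs (.M (k + 2*l + 1))
  | .Y k, .Y l =>
      (if (k : ZMod 2) = 0 then (if (l : ZMod 2) = 0 then ((l : ℂ) - k)/4 else (l : ℂ)/4)
       else (if (l : ZMod 2) = 0 then -((k : ℂ)/4) else 2)) • bs (.M (k + l))
  | _, _ => 0

/-- The super-bracket of `tsns`, as a bilinear map. -/
def brk : Tsns →ₗ[ℂ] Tsns →ₗ[ℂ] Tsns :=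
  Finsupp.lsum ℂ fun i => LinearMap.toSpanSingleton ℂ _
    (Finsupp.lsum ℂ fun j => LinearMap.toSpanSingleton ℂ Tsns (brIdx i j))

/-- `x` is homogeneous of parity `σ`. -/
def IsHom (σ : ZMod 2) (x : Tsns) : Prop := ∀ i ∈ x.support, parity i = σ

/-- The tensor square `tsns ⊗ tsns`, modelled as the free vector space on pairs
of basis indices. -/
abbrev T2 : Type := (TIdx × TIdx) →₀ ℂ

/-- The tensor cube `tsns ⊗ tsns ⊗ tsns`. -/
abbrev T3 : Type := (TIdx × TIdx × TIdx) →₀ ℂ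

/-- The tensor product map `tsns × tsns → tsns ⊗ tsns`. -/
def tp : Tsns →ₗ[ℂ] Tsns →ₗ[ℂ] T2 :=
  Finsupp.lsum ℂ fun i => LinearMap.toSpanSingleton ℂ _
    (Finsupp.lsum ℂ fun j => LinearMap.toSpanSingleton ℂ T2 (Finsupp.single (i, j) 1))

/-- The tensor product map `tsns × tsns × tsns → tsns ⊗ tsns ⊗ tsns`. -/
def t3 : Tsns →ₗ[ℂ] Tsns →ₗ[ℂ] Tsns →ₗ[ℂ] T3 :=
  Finsupp.lsum ℂ fun i => LinearMap.toSpanSingleton ℂ _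
    (Finsupp.lsum ℂ fun j => LinearMap.toSpanSingleton ℂ _
      (Finsupp.lsum ℂ fun k => LinearMap.toSpanSingleton ℂ T3 (Finsupp.single (i, j, k) 1)))

/-- The adjoint diagonal action of `tsns` on `tsns ⊗ tsns`:
`x ∗ (a ⊗ b) = [x,a] ⊗ b + (-1)^{[x][a]} a ⊗ [x,b]`. -/
def star2 : Tsns →ₗ[ℂ] T2 →ₗ[ℂ] T2 :=
  Finsupp.lsum ℂ fun i => LinearMap.toSpanSingleton ℂ _
    (Finsupp.lsum ℂ fun p => LinearMap.toSpanSingleton ℂ T2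
      (tp (brIdx i p.1) (bs p.2) + sg (parity i) (parity p.1) • tp (bs p.1) (brIdx i p.2)))

/-- The adjoint diagonal action of `tsns` on `tsns ⊗ tsns ⊗ tsns`. -/
def star3 : Tsns →ₗ[ℂ] T3 →ₗ[ℂ] T3 :=
  Finsupp.lsum ℂ fun i => LinearMap.toSpanSingleton ℂ _
    (Finsupp.lsum ℂ fun t => LinearMap.toSpanSingleton ℂ T3
      (t3 (brIdx i t.1) (bs t.2.1) (bs t.2.2)
        + sg (parity i) (parity t.1) • t3 (bs t.1) (brIdx i t.2.1) (bs t.2.2)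
        + (sg (parity i) (parity t.1) * sg (parity i) (parity t.2.1)) •
            t3 (bs t.1) (bs t.2.1) (brIdx i t.2.2)))

/-- The super-twist map `τ(x ⊗ y) = (-1)^{[x][y]} y ⊗ x`. -/
def tau : T2 →ₗ[ℂ] T2 :=
  Finsupp.lsum ℂ fun p => LinearMap.toSpanSingleton ℂ T2
    (sg (parity p.1) (parity p.2) • Finsupp.single (p.2, p.1) 1)

/-- The super-cyclic map `ξ(x₁ ⊗ x₂ ⊗ x₃) = (-1)^{[x₁]([x₂]+[x₃])} x₂ ⊗ x₃ ⊗ x₁`. -/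
def xi : T3 →ₗ[ℂ] T3 :=
  Finsupp.lsum ℂ fun t => LinearMap.toSpanSingleton ℂ T3
    (sg (parity t.1) (parity t.2.1 + parity t.2.2) • Finsupp.single (t.2.1, t.2.2, t.1) 1)

/-- `Im(1⊗1 - τ) ⊆ tsns ⊗ tsns`. -/
def ImSkew : Submodule ℂ T2 := LinearMap.range (LinearMap.id - tau)

/-- `ℂ M₀ ⊗ M₀`, the tensor square of the center. -/
def CC : Submodule ℂ T2 := Submodule.span ℂ {Finsupp.single (TIdx.M 0, TIdx.M 0) 1}

/-- The `(1/2)ℤ`-degree of a basis vector, recorded in half-units (i.e. twice the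
degree, an integer). -/
def hdeg : TIdx → ℤ
  | .L n => 2*n
  | .G k => 2*k + 1
  | .Y k => k
  | .M k => k

/-- The degree (in half-units) of a basis vector of the tensor square. -/
def hdeg2 (p : TIdx × TIdx) : ℤ := hdeg p.1 + hdeg p.2

/-- `d : tsns → tsns ⊗ tsns` is a homogeneous derivation of `ℤ₂`-parity `π`:
`d [x,y] = (-1)^{[d][x]} x ∗ d y - (-1)^{[y]([d]+[x])} y ∗ d x`
(stated on homogeneous basis vectors). -/
def IsDerP (π : ZMod 2) (d : Tsns →ₗ[ℂ] T2) : Prop :=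
  ∀ i j : TIdx, d (brk (bs i) (bs j)) =
    sg π (parity i) • star2 (bs i) (d (bs j))
      - sg (parity j) (π + parity i) • star2 (bs j) (d (bs i))

/-- An even derivation `tsns → tsns ⊗ tsns`. -/
def IsDer2 (d : Tsns →ₗ[ℂ] T2) : Prop := IsDerP 0 d

/-- The special derivations `d^♮` on basis vectors (parameters `α, α†, β, β†`). -/
def dnatB (a a' b b' : ℂ) : TIdx → T2
  | .L n => (a * n) • Finsupp.single (.M 0, .M (2*n)) 1
      + (a' * n) • Finsupp.single (.M (2*n), .M 0) 1
  | .G k => (a * ((k : ℂ) + 1/2)) • Finsupp.single (.M 0, .M (2*k+1)) 1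
      + (a' * ((k : ℂ) + 1/2)) • Finsupp.single (.M (2*k+1), .M 0) 1
  | .Y k => b • Finsupp.single (.M 0, .Y k) 1 + b' • Finsupp.single (.Y k, .M 0) 1
  | .M k => (2*b) • Finsupp.single (.M 0, .M k) 1 + (2*b') • Finsupp.single (.M k, .M 0) 1

/-- The special derivations `d^♮ : tsns → tsns ⊗ tsns`. -/
def dnat (a a' b b' : ℂ) : Tsns →ₗ[ℂ] T2 :=
  Finsupp.lsum ℂ fun i => LinearMap.toSpanSingleton ℂ T2 (dnatB a a' b b' i)

/-- Multiplication by `(-1)^{σ·[u]}` on `tsns ⊗ tsns`. -/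
def twT2 (σ : ZMod 2) : T2 →ₗ[ℂ] T2 :=
  Finsupp.lsum ℂ fun p => LinearMap.toSpanSingleton ℂ T2
    (sg σ (parity p.1 + parity p.2) • Finsupp.single p 1)

/-- The coboundary `Δ_r (x) = (-1)^{[r][x]} x ∗ r`. -/
def Δr (r : T2) : Tsns →ₗ[ℂ] T2 :=
  Finsupp.lsum ℂ fun i => LinearMap.toSpanSingleton ℂ T2 (star2 (bs i) (twT2 (parity i) r))

/-- The embedding `tsns ⊗ (tsns ⊗ tsns) → tsns ⊗ tsns ⊗ tsns`. -/
def t13 : Tsns →ₗ[ℂ] T2 →ₗ[ℂ] T3 :=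
  Finsupp.lsum ℂ fun i => LinearMap.toSpanSingleton ℂ _
    (Finsupp.lsum ℂ fun q => LinearMap.toSpanSingleton ℂ T3 (Finsupp.single (i, q.1, q.2) 1))

/-- `1 ⊗ D : tsns ⊗ tsns → tsns ⊗ tsns ⊗ tsns` for an (even) linear map `D`. -/
def oneTensor (D : Tsns →ₗ[ℂ] T2) : T2 →ₗ[ℂ] T3 :=
  Finsupp.lsum ℂ fun p => LinearMap.toSpanSingleton ℂ T3 (t13 (bs p.1) (D (bs p.2)))

/-- The summand of `c(r)` coming from a pair of basis tensors
`p = a_i ⊗ b_i`, `q = a_j ⊗ b_j`. -/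
def cB (p q : TIdx × TIdx) : T3 :=
  sg (parity q.1) (parity p.2) • t3 (brIdx p.1 q.1) (bs p.2) (bs q.2)
    + t3 (bs p.1) (brIdx p.2 q.1) (bs q.2)
    + sg (parity q.1) (parity p.2) • t3 (bs p.1) (bs q.1) (brIdx p.2 q.2)

/-- `c` as a bilinear map. -/
def cY : T2 →ₗ[ℂ] T2 →ₗ[ℂ] T3 :=
  Finsupp.lsum ℂ fun p => LinearMap.toSpanSingleton ℂ _
    (Finsupp.lsum ℂ fun q => LinearMap.toSpanSingleton ℂ T3 (cB p q))

/-- `c(r) = [r¹²,r¹³] + [r¹²,r²³] + [r¹³,r²³]`. -/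
def cr (r : T2) : T3 := cY r r

/-- `(tsns, [·,·], D)` is a Lie superbialgebra: `Im D ⊆ Im(1⊗1−τ)`, the super
co-Jacobi identity holds, and `D` is a 1-cocycle. -/
def IsSuperBialg (D : Tsns →ₗ[ℂ] T2) : Prop :=
  (∀ x : Tsns, D x ∈ ImSkew) ∧
  (∀ x : Tsns,
    oneTensor D (D x) + xi (oneTensor D (D x)) + xi (xi (oneTensor D (D x))) = 0) ∧
  (∀ i j : TIdx, D (brk (bs i) (bs j)) =
    star2 (bs i) (D (bs j)) - sg (parity i) (parity j) • star2 (bs j) (D (bs i)))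

end

noncomputable section

/-- The `n`-fold tensor power `tsns^{⊗n}`, modelled as the free vector space on
`n`-tuples of basis indices. -/
abbrev TN (n : ℕ) : Type := (Fin n → TIdx) →₀ ℂ

/-- Insertion of an element of `tsns` into slot `k` of a basis pure tensor `f`. -/
def insN {n : ℕ} (f : Fin n → TIdx) (k : Fin n) : Tsns →ₗ[ℂ] TN n :=
  Finsupp.lsum ℂ fun j =>
    LinearMap.toSpanSingleton ℂ (TN n) (Finsupp.single (Function.update f k j) 1)

/-- The adjoint diagonal action of `tsns` on `tsns^{⊗n}`:
`x ∗ (v₁⊗⋯⊗v_n) = Σ_k (-1)^{[x]([v₁]+⋯+[v_{k-1}])} v₁⊗⋯⊗[x,v_k]⊗⋯⊗v_n`. -/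
def starN (n : ℕ) : Tsns →ₗ[ℂ] TN n →ₗ[ℂ] TN n :=
  Finsupp.lsum ℂ fun i => LinearMap.toSpanSingleton ℂ _
    (Finsupp.lsum ℂ fun f => LinearMap.toSpanSingleton ℂ (TN n)
      (∑ k : Fin n,
        (∏ j ∈ Finset.univ.filter (fun j => j < k), sg (parity i) (parity (f j))) •
          insN f k (brIdx i (f k))))

end


noncomputable section

/-- Index shift under bracketing with `L m`. -/
def shL (m : ℤ) : TIdx → TIdx
  | .L a => .L (m + a)
  | .G a => .G (a + m)
  | .Y a => .Y (a + 2*m)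
  | .M a => .M (a + 2*m)

/-- Scalar coefficient of `[L m, ·]` on basis vectors. -/
def cL (m : ℤ) : TIdx → ℂ
  | .L a => (a : ℂ) - m
  | .G a => (a : ℂ) + 1/2 - m/2
  | .Y a => if (a : ZMod 2) = 0 then ((a : ℂ) - m)/2 else (a : ℂ)/2
  | .M a => if (a : ZMod 2) = 0 then (a : ℂ)/2 else ((a : ℂ) + m)/2

lemma brIdx_L (m : ℤ) (i : TIdx) : brIdx (.L m) i = cL m i • bs (shL m i) := by
  cases i <;> rfl

lemma shL_inj (m : ℤ) : Function.Injective (shL m) := by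
  intro i j hij
  cases i <;> cases j <;> simp_all [shL] <;> omega

lemma hdeg_shL (m : ℤ) (i : TIdx) : hdeg (shL m i) = hdeg i + 2*m := by
  cases i <;> simp [shL, hdeg] <;> ring

lemma parity_L (m : ℤ) : parity (.L m) = 0 := rfl

lemma sg_zero (b : ZMod 2) : sg 0 b = 1 := by
  have : ¬((0 : ZMod 2) = 1 ∧ b = 1) := by rintro ⟨h, -⟩; exact absurd h (by decide)
  simp [sg, this]

lemma insN_bs {n : ℕ} (f : Fin n → TIdx) (k : Fin n) (j : TIdx) :
    insN f k (bs j) = Finsupp.single (Function.update f k j) 1 := by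
  rw [insN, bs, Finsupp.lsum_single, LinearMap.toSpanSingleton_apply, one_smul]

lemma starN_L_apply (n : ℕ) (m : ℤ) (v : TN n) (g : Fin n → TIdx) :
    starN n (bs (.L m)) v g =
      ∑ f ∈ v.support, v f * ∑ k : Fin n,
        cL m (f k) * (if Function.update f k (shL m (f k)) = g then 1 else 0) := by
  rw [starN, bs, Finsupp.lsum_single, LinearMap.toSpanSingleton_apply, one_smul,
    Finsupp.lsum_apply, Finsupp.sum, Finsupp.finset_sum_apply]
  refine Finset.sum_congr rfl fun f _ => ?_
  rw [LinearMap.toSpanSingleton_apply, Finsupp.smul_apply, smul_eq_mul]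
  congr 1
  rw [Finsupp.finset_sum_apply]
  refine Finset.sum_congr rfl fun k _ => ?_
  rw [parity_L]
  simp only [sg_zero, Finset.prod_const_one, one_smul]
  rw [brIdx_L, map_smul, Finsupp.smul_apply, insN_bs, smul_eq_mul, Finsupp.single_apply]

/-- Existence of a good shift `m`: bigger than the bound `B` and with nonzero
coefficient on a non-`M 0` index. -/
lemma exists_good_m (B : ℕ) (i : TIdx) (hi : i ≠ .M 0) :
    ∃ m : ℤ, (B : ℤ) < m ∧ cL m i ≠ 0 := by
  cases i with
  | L a =>
    refine ⟨(B : ℤ) + 2*|a| + 2, by have := abs_nonneg a; omega, ?_⟩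
    have ha : a ≠ (B : ℤ) + 2*|a| + 2 := by
      have := le_abs_self a; have := abs_nonneg a; omega
    simp only [cL]
    rw [sub_ne_zero]
    exact_mod_cast ha
  | G a =>
    refine ⟨(B : ℤ) + 2*|a| + 2, by have := abs_nonneg a; omega, ?_⟩
    have ha : (2*a + 1 : ℤ) ≠ (B : ℤ) + 2*|a| + 2 := by
      have := le_abs_self a; have := neg_le_abs a; have := abs_nonneg a; omega
    simp only [cL]
    intro hc
    apply ha
    have : ((2*a + 1 : ℤ) : ℂ) = (((B : ℤ) + 2*|a| + 2 : ℤ) : ℂ) := by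
      push_cast
      push_cast at hc
      linear_combination 2 * hc
    exact_mod_cast this
  | Y a =>
    refine ⟨(B : ℤ) + 2*|a| + 2, by have := abs_nonneg a; omega, ?_⟩
    simp only [cL]
    split
    · have ha : a ≠ (B : ℤ) + 2*|a| + 2 := by have := le_abs_self a; have := abs_nonneg a; omega
      have : ((a : ℂ) - ((B : ℤ) + 2*|a| + 2 : ℤ)) ≠ 0 := by
        rw [sub_ne_zero]; exact_mod_cast ha
      intro hc; apply this
      push_cast at hc ⊢
      linear_combination 2 * hc
    · next hodd =>
      have ha : a ≠ 0 := by rintro rfl; exact hodd (by norm_num)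
      have : (a : ℂ) ≠ 0 := Int.cast_ne_zero.mpr ha
      intro hc; apply this; linear_combination 2 * hc
  | M a =>
    have ha0 : a ≠ 0 := by rintro rfl; exact hi rfl
    refine ⟨(B : ℤ) + 2*|a| + 2, by have := abs_nonneg a; omega, ?_⟩
    simp only [cL]
    split
    · have : (a : ℂ) ≠ 0 := Int.cast_ne_zero.mpr ha0
      intro hc; apply this; linear_combination 2 * hc
    · have ha : (a : ℤ) + ((B : ℤ) + 2*|a| + 2) ≠ 0 := by
        have := neg_le_abs a; have := abs_nonneg a; omega
      have : ((a : ℂ) + ((B : ℤ) + 2*|a| + 2 : ℤ)) ≠ 0 := by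
        intro hc; apply ha
        exact_mod_cast (by push_cast at hc ⊢; linear_combination hc :
          ((a + ((B : ℤ) + 2*|a| + 2) : ℤ) : ℂ) = ((0 : ℤ) : ℂ))
      intro hc; apply this
      push_cast at hc ⊢
      linear_combination 2 * hc

end

/-- if `v ∈ tsns^{⊗n}` (`n ≥ 1`) satisfies `x ∗ v = 0` for all
`x ∈ tsns`, then `v ∈ (ℂ M₀)^{⊗n}`. -/
theorem annihilated_n_tensor_in_center (n : ℕ) (hn : 1 ≤ n) (v : TN n)
    (h : ∀ x : Tsns, starN n x v = 0) :
    v ∈ Submodule.span ℂ {Finsupp.single (fun _ : Fin n => TIdx.M 0) (1 : ℂ)} := by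
  have key : ∀ f ∈ v.support, ∀ k : Fin n, f k = TIdx.M 0 := by
    intro f hf k
    by_contra hfk
    -- uniform bound on half-degrees over the support
    obtain ⟨B, hbound⟩ : ∃ B : ℕ, ∀ f' ∈ v.support, ∀ j : Fin n,
        (hdeg (f' j)).natAbs ≤ B := by
      refine ⟨v.support.sup (fun f' => Finset.univ.sup fun j => (hdeg (f' j)).natAbs),
        fun f' hf' j => ?_⟩
      calc (hdeg (f' j)).natAbs
          ≤ Finset.univ.sup (fun j => (hdeg (f' j)).natAbs) :=
            Finset.le_sup (f := fun j => (hdeg (f' j)).natAbs) (Finset.mem_univ j)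
        _ ≤ _ :=
            Finset.le_sup (f := fun f' => Finset.univ.sup fun j => (hdeg (f' j)).natAbs) hf'
    obtain ⟨m, hmB, hc⟩ := exists_good_m B (f k) hfk
    set g : Fin n → TIdx := Function.update f k (shL m (f k)) with hg
    have h0 : starN n (bs (.L m)) v g = 0 := by
      rw [h (bs (.L m))]; rfl
    rw [starN_L_apply] at h0
    rw [Finset.sum_eq_single_of_mem f hf ?outer] at h0
    case outer =>
      intro f' hf' hne
      refine mul_eq_zero_of_right _ (Finset.sum_eq_zero fun k' _ => ?_)
      rw [if_neg, mul_zero]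
      intro hupd
      by_cases hkk : k' = k
      · subst hkk
        apply hne
        funext j
        by_cases hj : j = k'
        · subst hj
          have h1 : shL m (f' j) = g j := by
            have := congrFun hupd j
            rwa [Function.update_self] at this
          have h2 : g j = shL m (f j) := by rw [hg, Function.update_self]
          exact shL_inj m (h1.trans h2)
        · have h1 : f' j = g j := by
            have := congrFun hupd j
            rwa [Function.update_of_ne hj] at this
          have h2 : g j = f j := by rw [hg, Function.update_of_ne hj]
          exact h1.trans h2
      · have h1 : g k' = f k' := by rw [hg, Function.update_of_ne hkk]
        have h2 : shL m (f' k') = g k' := by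
          have := congrFun hupd k'
          rwa [Function.update_self] at this
        have h3 : hdeg (f k') = hdeg (f' k') + 2*m := by
          rw [← h1, ← h2, hdeg_shL]
        have b1 := hbound f hf k'
        have b2 := hbound f' hf' k'
        omega
    rw [Fintype.sum_eq_single k ?inner] at h0
    case inner =>
      intro k' hkk
      rw [if_neg, mul_zero]
      intro hupd
      have h1 : g k' = f k' := by rw [hg, Function.update_of_ne hkk]
      have h2 : shL m (f k') = g k' := by
        have := congrFun hupd k'
        rwa [Function.update_self] at this
      have h3 : hdeg (f k') = hdeg (f k') + 2*m := by
        conv_lhs => rw [← h1, ← h2, hdeg_shL]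
      omega
    rw [if_pos rfl, mul_one] at h0
    rcases mul_eq_zero.mp h0 with h0 | h0
    · exact (Finsupp.mem_support_iff.mp hf) h0
    · exact hc h0
  have hsub : v.support ⊆ {fun _ : Fin n => TIdx.M 0} := by
    intro f hf
    exact Finset.mem_singleton.mpr (funext fun k => key f hf k)
  rw [Finsupp.support_subset_singleton] at hsub
  refine Submodule.mem_span_singleton.mpr ⟨v (fun _ => TIdx.M 0), ?_⟩
  rw [Finsupp.smul_single', mul_one, ← hsub]
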